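/- Let S be a real m×m matrix, A a real m×n matrix, d ∈ ℝ^m, M a real n×n matrix, and let Ω₁, Ω₂ be two disjoint sets with Ω₁ ∪ Ω₂ = {1,…,n}. Define J : ℝ^n → ℝ by J(f) = (1/2)‖S(d − Af)‖₂² + (1/2)Σ_{ℓ∈Ω₁}|(Mf)_ℓ| + (1/2)Σ_{ℓ∈Ω₂}(Mf)_ℓ². If the quadratic form f ↦ ‖SAf‖₂² + Σ_{ℓ∈Ω₂}(Mf)_ℓ² is positive definite (i.e., it vanishes only at f = 0), then J is strictly convex and has a unique minimizer on ℝ^n. -/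
import Mathlib


open Matrix Finset

/-- Squared Euclidean norm of a vector. -/
noncomputable def enormSq {m : ℕ} (x : Fin m → ℝ) : ℝ := ∑ i, (x i) ^ 2

lemma enormSq_nonneg' {m : ℕ} (x : Fin m → ℝ) : 0 ≤ enormSq x :=
  Finset.sum_nonneg fun _ _ => sq_nonneg _

lemma combo_sq (a b u v : ℝ) (hab : a + b = 1) :
    (a*u + b*v)^2 = a*u^2 + b*v^2 - a*b*(u-v)^2 := by
  have hb : b = 1 - a := by linarith
  subst hb; ring

lemma enormSq_sub_ge {m : ℕ} (u v : Fin m → ℝ) :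
    (1/2) * enormSq v - enormSq u ≤ enormSq (u - v) := by
  simp only [enormSq, Finset.mul_sum, ← Finset.sum_sub_distrib]
  apply Finset.sum_le_sum
  intro i _
  simp only [Pi.sub_apply]
  nlinarith [sq_nonneg (2 * u i - v i)]

lemma enormSq_smul {m : ℕ} (r : ℝ) (x : Fin m → ℝ) :
    enormSq (r • x) = r^2 * enormSq x := by
  simp only [enormSq, Pi.smul_apply, smul_eq_mul, mul_pow, Finset.mul_sum]

/-- if the quadratic form `f ↦ ‖SAf‖₂² + Σ_{ℓ∈Ω₂}(Mf)_ℓ²` is positive definite,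
then the mixed ℓ¹/ℓ² functional
`J f = (1/2)‖S(d − Af)‖₂² + (1/2)Σ_{ℓ∈Ω₁}|(Mf)_ℓ| + (1/2)Σ_{ℓ∈Ω₂}(Mf)_ℓ²`
is strictly convex and has a unique minimizer on `ℝ^n`. -/
theorem stmt3 (m n : ℕ) (S : Matrix (Fin m) (Fin m) ℝ) (A : Matrix (Fin m) (Fin n) ℝ)
    (d : Fin m → ℝ) (M : Matrix (Fin n) (Fin n) ℝ)
    (Ω₁ Ω₂ : Finset (Fin n)) (hdisj : Disjoint Ω₁ Ω₂) (hunion : Ω₁ ∪ Ω₂ = Finset.univ)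
    (hposdef : ∀ f : Fin n → ℝ,
      enormSq (S.mulVec (A.mulVec f)) + ∑ ℓ ∈ Ω₂, (M.mulVec f ℓ) ^ 2 = 0 → f = 0)
    (J : (Fin n → ℝ) → ℝ)
    (hJ : ∀ f, J f = (1 / 2) * enormSq (S.mulVec (d - A.mulVec f))
      + (1 / 2) * ∑ ℓ ∈ Ω₁, |M.mulVec f ℓ|
      + (1 / 2) * ∑ ℓ ∈ Ω₂, (M.mulVec f ℓ) ^ 2) :
    StrictConvexOn ℝ Set.univ J ∧
      ∃! f : Fin n → ℝ, ∀ g : Fin n → ℝ, J f ≤ J g := by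
  classical
  set Q : (Fin n → ℝ) → ℝ :=
    fun f => enormSq (S.mulVec (A.mulVec f)) + ∑ ℓ ∈ Ω₂, (M.mulVec f ℓ) ^ 2 with hQdef
  have hQ0 : ∀ f, 0 ≤ Q f := fun f =>
    add_nonneg (enormSq_nonneg' _) (Finset.sum_nonneg fun _ _ => sq_nonneg _)
  have hQpos : ∀ f : Fin n → ℝ, f ≠ 0 → 0 < Q f := by
    intro f hf
    rcases (hQ0 f).lt_or_eq with h | h
    · exact h
    · exact absurd (hposdef f h.symm) hf
  -- strict convexity
  have hstrict : StrictConvexOn ℝ Set.univ J := by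
    refine ⟨convex_univ, ?_⟩
    intro x _ y _ hxy a b ha hb hab
    have hA : ∀ i, S.mulVec (d - A.mulVec (a•x + b•y)) i
        = a * (S.mulVec (d - A.mulVec x) i) + b * (S.mulVec (d - A.mulVec y) i) := by
      intro i
      simp only [Matrix.mulVec_sub, Matrix.mulVec_add, Matrix.mulVec_smul, Pi.sub_apply,
        Pi.add_apply, Pi.smul_apply, smul_eq_mul]
      linear_combination (-(S.mulVec d i)) * hab
    have hN : ∀ ℓ, M.mulVec (a•x + b•y) ℓ = a * M.mulVec x ℓ + b * M.mulVec y ℓ := by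
      intro ℓ
      simp only [Matrix.mulVec_add, Matrix.mulVec_smul, Pi.add_apply, Pi.smul_apply, smul_eq_mul]
    have hsum1 : enormSq (S.mulVec (d - A.mulVec (a•x + b•y)))
        = a * enormSq (S.mulVec (d - A.mulVec x)) + b * enormSq (S.mulVec (d - A.mulVec y))
          - a*b * enormSq (S.mulVec (A.mulVec (x - y))) := by
      simp only [enormSq, Finset.mul_sum, ← Finset.sum_sub_distrib, ← Finset.sum_add_distrib]
      apply Finset.sum_congr rfl
      intro i _
      rw [hA i, combo_sq a b _ _ hab]
      have hd : (S.mulVec (d - A.mulVec x) i - S.mulVec (d - A.mulVec y) i)^2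
          = (S.mulVec (A.mulVec (x - y)) i)^2 := by
        simp only [Matrix.mulVec_sub, Pi.sub_apply]; ring
      rw [hd]
    have hsum2 : ∑ ℓ ∈ Ω₂, (M.mulVec (a•x + b•y) ℓ)^2
        = a * ∑ ℓ ∈ Ω₂, (M.mulVec x ℓ)^2 + b * ∑ ℓ ∈ Ω₂, (M.mulVec y ℓ)^2
          - a*b * ∑ ℓ ∈ Ω₂, (M.mulVec (x - y) ℓ)^2 := by
      simp only [Finset.mul_sum, ← Finset.sum_sub_distrib, ← Finset.sum_add_distrib]
      apply Finset.sum_congr rfl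
      intro ℓ _
      rw [hN ℓ]
      have hd : M.mulVec (x - y) ℓ = M.mulVec x ℓ - M.mulVec y ℓ := by
        simp only [Matrix.mulVec_sub, Pi.sub_apply]
      rw [hd]
      exact combo_sq a b _ _ hab
    have hsum3 : ∑ ℓ ∈ Ω₁, |M.mulVec (a•x + b•y) ℓ|
        ≤ a * ∑ ℓ ∈ Ω₁, |M.mulVec x ℓ| + b * ∑ ℓ ∈ Ω₁, |M.mulVec y ℓ| := by
      simp only [Finset.mul_sum, ← Finset.sum_add_distrib]
      apply Finset.sum_le_sum
      intro ℓ _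
      rw [hN ℓ]
      calc |a * M.mulVec x ℓ + b * M.mulVec y ℓ|
          ≤ |a * M.mulVec x ℓ| + |b * M.mulVec y ℓ| := abs_add_le _ _
        _ = a * |M.mulVec x ℓ| + b * |M.mulVec y ℓ| := by
            rw [abs_mul, abs_mul, abs_of_pos ha, abs_of_pos hb]
    have hgap : 0 < a * b * Q (x - y) :=
      mul_pos (mul_pos ha hb) (hQpos _ (sub_ne_zero.mpr hxy))
    have hQxy : Q (x - y)
        = enormSq (S.mulVec (A.mulVec (x - y))) + ∑ ℓ ∈ Ω₂, (M.mulVec (x - y) ℓ) ^ 2 := rfl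
    simp only [smul_eq_mul]
    rw [hJ, hJ, hJ, hsum1, hsum2]
    rw [hQxy] at hgap
    nlinarith [hsum3]
  refine ⟨hstrict, ?_⟩
  -- existence
  have hLcont : Continuous fun f : Fin n → ℝ => S.mulVec (A.mulVec f) :=
    (S.mulVecLin.comp A.mulVecLin).continuous_of_finiteDimensional
  have hMcont : Continuous fun f : Fin n → ℝ => M.mulVec f :=
    M.mulVecLin.continuous_of_finiteDimensional
  have henorm : Continuous fun x : Fin m → ℝ => enormSq x :=
    continuous_finset_sum _ fun i _ => (continuous_apply i).pow 2
  have hQcont : Continuous Q := by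
    apply Continuous.add (henorm.comp hLcont)
    exact continuous_finset_sum _ fun ℓ _ => ((continuous_apply ℓ).comp hMcont).pow 2
  have hJcont : Continuous J := by
    have : J = fun f => (1 / 2) * enormSq (S.mulVec (d - A.mulVec f))
      + (1 / 2) * ∑ ℓ ∈ Ω₁, |M.mulVec f ℓ|
      + (1 / 2) * ∑ ℓ ∈ Ω₂, (M.mulVec f ℓ) ^ 2 := funext hJ
    rw [this]
    apply Continuous.add
    apply Continuous.add
    · apply Continuous.mul continuous_const
      exact henorm.comp ((S.mulVecLin.continuous_of_finiteDimensional).comp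
        (continuous_const.sub A.mulVecLin.continuous_of_finiteDimensional))
    · exact continuous_const.mul (continuous_finset_sum _ fun ℓ _ =>
        ((continuous_apply ℓ).comp hMcont).abs)
    · exact continuous_const.mul (continuous_finset_sum _ fun ℓ _ =>
        ((continuous_apply ℓ).comp hMcont).pow 2)
  by_cases hn : n = 0
  · subst hn
    refine ⟨0, fun g => le_of_eq (congrArg J (Subsingleton.elim 0 g)),
      fun f _ => Subsingleton.elim f 0⟩
  -- n ≥ 1 : coercivity
  have hne : Nonempty (Fin n) := ⟨⟨0, Nat.pos_of_ne_zero hn⟩⟩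
  have hQhom : ∀ (r : ℝ) (f : Fin n → ℝ), Q (r • f) = r^2 * Q f := by
    intro r f
    simp only [hQdef, Matrix.mulVec_smul, enormSq_smul, Pi.smul_apply, smul_eq_mul, mul_pow,
      Finset.mul_sum, mul_add]
  have hsph : (Metric.sphere (0 : Fin n → ℝ) 1).Nonempty := by
    refine ⟨(fun _ => 1), ?_⟩
    rw [mem_sphere_zero_iff_norm]
    simpa using (Pi.norm_const (ι := Fin n) (1 : ℝ))
  obtain ⟨x0, hx0, hminQ⟩ := (isCompact_sphere (0 : Fin n → ℝ) 1).exists_isMinOn hsph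
    hQcont.continuousOn
  have hx0norm : ‖x0‖ = 1 := mem_sphere_zero_iff_norm.mp hx0
  set c := Q x0 with hc
  have hcpos : 0 < c := by
    apply hQpos
    intro h
    rw [h] at hx0norm
    simp at hx0norm
  have hQlb : ∀ f : Fin n → ℝ, c * ‖f‖^2 ≤ Q f := by
    intro f
    by_cases hf : f = 0
    · subst hf
      simpa using (hQ0 0).trans_eq (by simp [hQdef, enormSq])
    · have hfn : (0:ℝ) < ‖f‖ := norm_pos_iff.mpr hf
      set u := ‖f‖⁻¹ • f with hu
      have hun : ‖u‖ = 1 := by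
        rw [hu, norm_smul, norm_inv, norm_norm, inv_mul_cancel₀ hfn.ne']
      have hfu : f = ‖f‖ • u := by
        rw [hu, smul_smul, mul_inv_cancel₀ hfn.ne', one_smul]
      have := hminQ (mem_sphere_zero_iff_norm.mpr hun)
      have hQf : Q f = ‖f‖^2 * Q u := by
        nth_rewrite 1 [hfu]
        rw [hQhom]
      calc c * ‖f‖^2 ≤ Q u * ‖f‖^2 :=
            mul_le_mul_of_nonneg_right this (by positivity)
        _ = Q f := by rw [hQf]; ring
  set K := enormSq (S.mulVec d) with hK
  clear_value c K
  have hJlb : ∀ f : Fin n → ℝ, c/4 * ‖f‖^2 - K/2 ≤ J f := by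
    intro f
    rw [hJ]
    have h1 := enormSq_sub_ge (S.mulVec d) (S.mulVec (A.mulVec f))
    have h2 : S.mulVec d - S.mulVec (A.mulVec f) = S.mulVec (d - A.mulVec f) := by
      rw [Matrix.mulVec_sub]
    rw [h2] at h1
    have h3 : (0:ℝ) ≤ ∑ ℓ ∈ Ω₁, |M.mulVec f ℓ| :=
      Finset.sum_nonneg fun _ _ => abs_nonneg _
    have h4 : (0:ℝ) ≤ ∑ ℓ ∈ Ω₂, (M.mulVec f ℓ)^2 :=
      Finset.sum_nonneg fun _ _ => sq_nonneg _
    have h5 : c * ‖f‖^2 ≤ enormSq (S.mulVec (A.mulVec f)) + ∑ ℓ ∈ Ω₂, (M.mulVec f ℓ)^2 :=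
      hQlb f
    rw [← hK] at h1
    linarith
  have htend : Filter.Tendsto J (Filter.cocompact _) Filter.atTop := by
    apply Filter.tendsto_atTop_mono hJlb
    have h1 : Filter.Tendsto (fun r : ℝ => c/4 * r^2 - K/2) Filter.atTop Filter.atTop := by
      apply Filter.tendsto_atTop_add_const_right
      exact (Filter.tendsto_pow_atTop (by norm_num)).const_mul_atTop (by positivity)
    exact h1.comp tendsto_norm_cocompact_atTop
  obtain ⟨f0, hf0⟩ := hJcont.exists_forall_le htend
  refine ⟨f0, hf0, ?_⟩
  intro g hg
  by_contra hgf
  have hJeq : J g = J f0 := le_antisymm (hg f0) (hf0 g)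
  have := hstrict.2 (Set.mem_univ g) (Set.mem_univ f0) hgf
    (by norm_num : (0:ℝ) < 1/2) (by norm_num : (0:ℝ) < 1/2) (by norm_num)
  simp only [smul_eq_mul, hJeq] at this
  have hmin := hg ((1/2 : ℝ) • g + (1/2 : ℝ) • f0)
  linarith
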